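/- arXiv:2007.06368 — 2 statements merged into one kernel-verified Lean document; each statement's English description precedes it below -/
import Mathlib

section
/- Let A_0 be a real symmetric positive definite n×n matrix, let x_0, x_1, …, x_{T−1} ∈ ℝⁿ, and define recursively A_{t+1} = A_t + x_t x_tᵀ. Then Σ_{t=0}^{T−1} min(x_tᵀ A_t⁻¹ x_t, 1) ≤ 2·(log det(A_T) − log det(A_0)). -/
open Matrix

theorem aux_psd_vecMulVec {n : ℕ} (x : Fin n → ℝ) : (vecMulVec x x).PosSemidef := by
  have h : vecMulVec x x = (replicateRow Unit x)ᴴ * replicateRow Unit x := by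
    rw [vecMulVec_eq Unit]; congr 1
  rw [h]
  exact posSemidef_conjTranspose_mul_self _

theorem aux_det {n : ℕ} (A : Matrix (Fin n) (Fin n) ℝ) (hA : A.PosDef) (x : Fin n → ℝ) :
    (A + vecMulVec x x).det = A.det * (1 + x ⬝ᵥ A⁻¹ *ᵥ x) := by
  rw [vecMulVec_eq Unit, det_add_replicateCol_mul_replicateRow hA.det_pos.ne'.isUnit,
    Matrix.mul_assoc, ← replicateCol_mulVec]
  simp [det_unique]

theorem aux_log (a : ℝ) (ha : 0 ≤ a) : min a 1 ≤ 2 * Real.log (1 + a) := by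
  have h1 : (0:ℝ) < 1 + a := by linarith
  have h2 : 1 - (1+a)⁻¹ ≤ Real.log (1 + a) := by
    have := Real.log_le_sub_one_of_pos (x := (1+a)⁻¹) (by positivity)
    rw [Real.log_inv] at this
    linarith
  have hinv : (1+a) * (1+a)⁻¹ = 1 := mul_inv_cancel₀ h1.ne'
  rcases le_total a 1 with h | h
  · rw [min_eq_left h]; nlinarith
  · rw [min_eq_right h]; nlinarith

/-- Elliptical potential bound along the recursion `A_{t+1} = A_t + x_t x_tᵀ`:
`∑_{t<T} min (x_tᵀ A_t⁻¹ x_t) 1 ≤ 2 (log det A_T − log det A_0)`. -/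
theorem stmt_9 {n : ℕ} (T : ℕ) (x : ℕ → (Fin n → ℝ))
    (A : ℕ → Matrix (Fin n) (Fin n) ℝ) (hA0 : (A 0).PosDef)
    (hrec : ∀ t, A (t + 1) = A t + vecMulVec (x t) (x t)) :
    ∑ t ∈ Finset.range T, min (x t ⬝ᵥ ((A t)⁻¹ *ᵥ x t)) 1 ≤
      2 * (Real.log (A T).det - Real.log (A 0).det) := by
  have hPD : ∀ t, (A t).PosDef := by
    intro t
    induction t with
    | zero => exact hA0
    | succ t ih => rw [hrec t]; exact ih.add_posSemidef (aux_psd_vecMulVec (x t))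
  set a : ℕ → ℝ := fun t => x t ⬝ᵥ ((A t)⁻¹ *ᵥ x t) with ha_def
  have ha : ∀ t, 0 ≤ a t := by
    intro t
    have := ((hPD t).posSemidef.inv).dotProduct_mulVec_nonneg (x t)
    simpa using this
  have hdet : ∀ t, Real.log (A (t+1)).det - Real.log (A t).det = Real.log (1 + a t) := by
    intro t
    rw [hrec t, aux_det (A t) (hPD t) (x t),
      Real.log_mul (hPD t).det_pos.ne' (by have := ha t; positivity)]
    ring
  have htel : Real.log (A T).det - Real.log (A 0).det
      = ∑ t ∈ Finset.range T, Real.log (1 + a t) := by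
    rw [← Finset.sum_range_sub (fun t => Real.log (A t).det) T]
    exact Finset.sum_congr rfl fun t _ => hdet t
  rw [htel, Finset.mul_sum]
  exact Finset.sum_le_sum fun t _ => aux_log (a t) (ha t)
end

section
/- Let S and A be real symmetric positive definite n×n matrices such that A − S is positive semidefinite, and let x ∈ ℝⁿ. Then det(A + x xᵀ)/det(S + x xᵀ) ≤ det(A)/det(S). -/
open Matrix

private lemma quad_aux {n : ℕ} {S : Matrix (Fin n) (Fin n) ℝ} (hS : S.PosDef)
    (x y : Fin n → ℝ) :
    2 * (y ⬝ᵥ x) - y ⬝ᵥ S *ᵥ y ≤ x ⬝ᵥ S⁻¹ *ᵥ x := by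
  have hinv : S * S⁻¹ = 1 := mul_nonsing_inv S hS.det_pos.ne'.isUnit
  have hx' : S *ᵥ (S⁻¹ *ᵥ x) = x := by rw [mulVec_mulVec, hinv, one_mulVec]
  have hsymm : ∀ a b : Fin n → ℝ, a ⬝ᵥ S *ᵥ b = b ⬝ᵥ S *ᵥ a := by
    intro a b
    rw [dotProduct_mulVec, ← mulVec_transpose, dotProduct_comm]
    congr 1
    rw [← conjTranspose_eq_transpose_of_trivial, hS.isHermitian.eq]
  set w : Fin n → ℝ := S⁻¹ *ᵥ x with hw
  have h0 : 0 ≤ (y - w) ⬝ᵥ S *ᵥ (y - w) := by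
    simpa using hS.posSemidef.dotProduct_mulVec_nonneg (y - w)
  have expand : (y - w) ⬝ᵥ S *ᵥ (y - w)
      = y ⬝ᵥ S *ᵥ y - y ⬝ᵥ x - w ⬝ᵥ S *ᵥ y + w ⬝ᵥ x := by
    rw [mulVec_sub, dotProduct_sub, sub_dotProduct, sub_dotProduct]
    have h3 : y ⬝ᵥ S *ᵥ w = y ⬝ᵥ x := by rw [hw, hx']
    have h4 : w ⬝ᵥ S *ᵥ w = w ⬝ᵥ x := by rw [hx']
    rw [h3, h4]; ring
  have h1 : w ⬝ᵥ S *ᵥ y = y ⬝ᵥ x := by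
    rw [hsymm w y, hw, hx']
  have h2 : w ⬝ᵥ x = x ⬝ᵥ S⁻¹ *ᵥ x := by rw [hw, dotProduct_comm]
  rw [expand, h1, h2] at h0
  linarith

private lemma det_rank_one {n : ℕ} {M : Matrix (Fin n) (Fin n) ℝ} (hM : IsUnit M.det)
    (x : Fin n → ℝ) :
    (M + vecMulVec x x).det = M.det * (1 + x ⬝ᵥ M⁻¹ *ᵥ x) := by
  rw [vecMulVec_eq (ι := Fin 1), det_add_replicateCol_mul_replicateRow (ι := Fin 1) hM]
  simp only [det_unique]
  congr 1
  simp [mul_apply, replicateRow, replicateCol, dotProduct, mulVec, Finset.mul_sum, Finset.sum_mul, of_apply]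
  rw [Finset.sum_comm]
  refine Finset.sum_congr rfl fun i _ => ?_
  refine Finset.sum_congr rfl fun j _ => ?_
  ring

/-- Adding the same rank-one update to the numerator and denominator does not
increase the determinant ratio: if `A - S` is positive semidefinite then
`det (A + xxᵀ) / det (S + xxᵀ) ≤ det A / det S`. -/
theorem stmt_12 {n : ℕ} (S A : Matrix (Fin n) (Fin n) ℝ)
    (hS : S.PosDef) (hA : A.PosDef) (hAS : (A - S).PosSemidef)
    (x : Fin n → ℝ) :
    (A + vecMulVec x x).det / (S + vecMulVec x x).det ≤ A.det / S.det := by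
  have hdA : 0 < A.det := hA.det_pos
  have hdS : 0 < S.det := hS.det_pos
  set qA := x ⬝ᵥ A⁻¹ *ᵥ x with hqA
  set qS := x ⬝ᵥ S⁻¹ *ᵥ x with hqS
  have hqA0 : 0 ≤ qA := by simpa using hA.inv.posSemidef.dotProduct_mulVec_nonneg x
  -- qA ≤ qS
  have hAinv : A * A⁻¹ = 1 := mul_nonsing_inv A hdA.ne'.isUnit
  set y : Fin n → ℝ := A⁻¹ *ᵥ x with hy
  have hAy : A *ᵥ y = x := by rw [hy, mulVec_mulVec, hAinv, one_mulVec]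
  have hyx : y ⬝ᵥ x = qA := by rw [hqA, hy, dotProduct_comm]
  have hyAy : y ⬝ᵥ A *ᵥ y = qA := by rw [hAy, hyx]
  have hSA : y ⬝ᵥ S *ᵥ y ≤ y ⬝ᵥ A *ᵥ y := by
    have h := hAS.dotProduct_mulVec_nonneg y
    simp only [star_trivial, sub_mulVec, dotProduct_sub] at h
    linarith
  have hle : qA ≤ qS := by
    have h := quad_aux hS x y
    rw [hyx] at h
    linarith [hSA, hyAy.symm ▸ h]
  have e1 : (A + vecMulVec x x).det = A.det * (1 + qA) := det_rank_one hdA.ne'.isUnit x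
  have e2 : (S + vecMulVec x x).det = S.det * (1 + qS) := det_rank_one hdS.ne'.isUnit x
  rw [e1, e2, div_le_div_iff₀ (by nlinarith) hdS]
  nlinarith [mul_pos hdA hdS]
end
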